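/- Let n be a positive natural number, a > 0 and s > 0, and let p₀ be a probability density function on ℝⁿ with finite first moment (∫ ‖x₀‖ p₀(x₀) dx₀ < ∞). Define p(x) = ∫_{ℝⁿ} (2πs)^{-n/2} · exp(-‖x - a·x₀‖² / (2s)) · p₀(x₀) dx₀. Then p is everywhere positive and differentiable, and for every x ∈ ℝⁿ its score satisfies ∇ log p(x) = (1/s) · ( a · m(x) - x ), where m(x) = ( ∫ x₀ · exp(-‖x - a·x₀‖²/(2s)) · p₀(x₀) dx₀ ) / ( ∫ exp(-‖x - a·x₀‖²/(2s)) · p₀(x₀) dx₀ ) is the posterior mean of x₀ given the observation x. -/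

import Mathlib

open MeasureTheory Real
open scoped BigOperators

noncomputable section

set_option maxHeartbeats 1000000 in
/-- score representation formula (from the proof of the paper's Theorem 1).
If `p` is the Gaussian-mixture marginal with scale factor `a` and variance `s` of a
probability density `p₀` with finite first moment, then `p` is positive and differentiable
everywhere and `∇ log p(x) = (1/s)(a·m(x) - x)` where `m(x)` is the posterior mean. -/
theorem score_representation
    (n : ℕ) (hn : 0 < n) (a s : ℝ) (ha : 0 < a) (hs : 0 < s)
    (p₀ : EuclideanSpace ℝ (Fin n) → ℝ)
    (hp₀nonneg : ∀ x, 0 ≤ p₀ x)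
    (hp₀int : Integrable p₀)
    (hp₀one : ∫ x, p₀ x = 1)
    (hp₀moment : Integrable (fun x₀ => ‖x₀‖ * p₀ x₀))
    (p : EuclideanSpace ℝ (Fin n) → ℝ)
    (hp : ∀ x, p x =
      ∫ x₀, (2 * π * s) ^ (-(n : ℝ) / 2) * Real.exp (-‖x - a • x₀‖ ^ 2 / (2 * s)) * p₀ x₀)
    (m : EuclideanSpace ℝ (Fin n) → EuclideanSpace ℝ (Fin n))
    (hm : ∀ x, m x =
      (∫ x₀, Real.exp (-‖x - a • x₀‖ ^ 2 / (2 * s)) * p₀ x₀)⁻¹ •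
        ∫ x₀, (Real.exp (-‖x - a • x₀‖ ^ 2 / (2 * s)) * p₀ x₀) • x₀) :
    (∀ x, 0 < p x) ∧ Differentiable ℝ p ∧
      ∀ x, gradient (fun y => Real.log (p y)) x = (1 / s) • (a • m x - x) := by
  classical
  set C : ℝ := (2 * π * s) ^ (-(n : ℝ) / 2) with hCdef
  have hCpos : 0 < C := Real.rpow_pos_of_pos (by positivity) _
  set g : (EuclideanSpace ℝ (Fin n)) → (EuclideanSpace ℝ (Fin n)) → ℝ := fun x x₀ => Real.exp (-‖x - a • x₀‖ ^ 2 / (2 * s)) * p₀ x₀ with hgdef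
  have hg_nonneg : ∀ x x₀, 0 ≤ g x x₀ := fun x x₀ =>
    mul_nonneg (Real.exp_pos _).le (hp₀nonneg _)
  have hg_le : ∀ x x₀, g x x₀ ≤ p₀ x₀ := by
    intro x x₀
    have h1 : Real.exp (-‖x - a • x₀‖ ^ 2 / (2 * s)) ≤ 1 := by
      rw [Real.exp_le_one_iff]
      have : (0:ℝ) ≤ ‖x - a • x₀‖ ^ 2 := by positivity
      have h2s : (0:ℝ) < 2 * s := by linarith
      exact div_nonpos_of_nonpos_of_nonneg (by linarith) h2s.le
    calc g x x₀ ≤ 1 * p₀ x₀ := mul_le_mul_of_nonneg_right h1 (hp₀nonneg _)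
      _ = p₀ x₀ := one_mul _
  have hg_meas : ∀ x, AEStronglyMeasurable (g x) volume := by
    intro x
    have hc : Continuous fun x₀ : (EuclideanSpace ℝ (Fin n)) => Real.exp (-‖x - a • x₀‖ ^ 2 / (2 * s)) := by
      fun_prop
    exact hc.aestronglyMeasurable.mul hp₀int.1
  have hg_int : ∀ x, Integrable (g x) := by
    intro x
    refine hp₀int.mono' (hg_meas x) (Filter.Eventually.of_forall fun x₀ => ?_)
    rw [Real.norm_of_nonneg (hg_nonneg x x₀)]
    exact hg_le x x₀
  have hJ_meas : ∀ x, AEStronglyMeasurable (fun x₀ => g x x₀ • x₀) volume := by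
    intro x
    exact (hg_meas x).smul aestronglyMeasurable_id
  have hJ_int : ∀ x, Integrable (fun x₀ => g x x₀ • x₀) := by
    intro x
    refine hp₀moment.mono' (hJ_meas x) (Filter.Eventually.of_forall fun x₀ => ?_)
    rw [norm_smul, Real.norm_of_nonneg (hg_nonneg x x₀)]
    calc g x x₀ * ‖x₀‖ ≤ p₀ x₀ * ‖x₀‖ :=
          mul_le_mul_of_nonneg_right (hg_le x x₀) (norm_nonneg _)
      _ = ‖x₀‖ * p₀ x₀ := mul_comm _ _
  -- positivity of the inner integral
  have hI₀pos : ∀ x, 0 < ∫ x₀, g x x₀ := by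
    intro x
    rw [integral_pos_iff_support_of_nonneg (fun x₀ => hg_nonneg x x₀) (hg_int x)]
    have hsupp : Function.support (g x) = Function.support p₀ := by
      ext x₀
      simp only [Function.mem_support, hgdef, mul_ne_zero_iff, ne_eq, Real.exp_ne_zero,
        not_false_eq_true, true_and]
    rw [hsupp]
    have := (integral_pos_iff_support_of_nonneg (fun x₀ => hp₀nonneg x₀) hp₀int).mp
      (by rw [hp₀one]; norm_num)
    exact this
  -- p as C times the inner integral
  have hp_eq : ∀ x, p x = C * ∫ x₀, g x x₀ := by
    intro x
    rw [hp x]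
    simp only [mul_assoc]
    exact integral_const_mul C _
  have hppos : ∀ x, 0 < p x := fun x => by
    rw [hp_eq x]; exact mul_pos hCpos (hI₀pos x)
  -- derivative of the inner integral
  have hasF : ∀ x : (EuclideanSpace ℝ (Fin n)), HasFDerivAt (fun y => ∫ x₀, g y x₀)
      (innerSL ℝ (s⁻¹ • (a • (∫ x₀, g x x₀ • x₀) - (∫ x₀, g x x₀) • x))) x := by
    intro x
    set v : (EuclideanSpace ℝ (Fin n)) → (EuclideanSpace ℝ (Fin n)) → (EuclideanSpace ℝ (Fin n)) := fun y x₀ => (g y x₀ / s) • (a • x₀ - y) with hvdef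
    set F' : (EuclideanSpace ℝ (Fin n)) → (EuclideanSpace ℝ (Fin n)) → (EuclideanSpace ℝ (Fin n)) →L[ℝ] ℝ := fun y x₀ => innerSL ℝ (v y x₀) with hF'def
    have hderiv : ∀ x₀ : (EuclideanSpace ℝ (Fin n)), ∀ y : (EuclideanSpace ℝ (Fin n)), HasFDerivAt (fun z => g z x₀) (F' y x₀) y := by
      intro x₀ y
      have h1 : HasFDerivAt (fun z : (EuclideanSpace ℝ (Fin n)) => ‖z - a • x₀‖ ^ 2)
          (2 • (innerSL ℝ (y - a • x₀))) y := by
        have := ((hasFDerivAt_id y).sub_const (a • x₀)).norm_sq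
        simpa using this
      have h2 := h1.const_mul (-(2 * s)⁻¹)
      have h3 := h2.exp
      have h4 := h3.mul_const (p₀ x₀)
      have hfun : (fun z => g z x₀) =
          fun z => Real.exp (-(2 * s)⁻¹ * ‖z - a • x₀‖ ^ 2) * p₀ x₀ := by
        funext z
        simp only [hgdef]
        congr 1
        congr 1
        ring
      rw [hfun]
      refine h4.congr_fderiv (Eq.symm ?_)
      ext u
      simp only [hF'def, hvdef, innerSL_apply_apply, ContinuousLinearMap.coe_smul',
        Pi.smul_apply, smul_eq_mul, ContinuousLinearMap.smul_apply,
        inner_sub_left, real_inner_smul_left, hgdef]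
      have hs' : s ≠ 0 := ne_of_gt hs
      have : Real.exp (-(2 * s)⁻¹ * ‖y - a • x₀‖ ^ 2)
          = Real.exp (-‖y - a • x₀‖ ^ 2 / (2 * s)) := by
        congr 1; ring
      rw [this]
      field_simp
      ring
    have hF_meas : ∀ᶠ y in nhds x, AEStronglyMeasurable (g y) volume :=
      Filter.Eventually.of_forall fun y => hg_meas y
    have hv_meas : ∀ y, AEStronglyMeasurable (v y) volume := by
      intro y
      have hsc : AEStronglyMeasurable (fun x₀ => g y x₀ / s) volume := by
        simp only [div_eq_mul_inv]
        exact (hg_meas y).mul_const s⁻¹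
      exact hsc.smul
        (((continuous_const_smul a).sub continuous_const).aestronglyMeasurable
          (f := fun x₀ : (EuclideanSpace ℝ (Fin n)) => a • x₀ - y))
    have hF'_meas : AEStronglyMeasurable (F' x) volume :=
      (innerSL ℝ (E := EuclideanSpace ℝ (Fin n))).continuous.comp_aestronglyMeasurable (hv_meas x)
    set bound : (EuclideanSpace ℝ (Fin n)) → ℝ := fun x₀ => p₀ x₀ / s * (a * ‖x₀‖ + (‖x‖ + 1)) with hbdef
    have hnormF' : ∀ y x₀, ‖F' y x₀‖ = ‖v y x₀‖ := by
      intro y x₀; simp [hF'def, innerSL_apply_norm]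
    have h_bound : ∀ᵐ x₀ ∂(volume : Measure (EuclideanSpace ℝ (Fin n))), ∀ y ∈ Metric.ball x 1,
        ‖F' y x₀‖ ≤ bound x₀ := by
      refine Filter.Eventually.of_forall fun x₀ y hy => ?_
      rw [hnormF', hvdef]
      simp only [norm_smul, Real.norm_eq_abs]
      have h1 : |g y x₀ / s| ≤ p₀ x₀ / s := by
        rw [abs_of_nonneg (div_nonneg (hg_nonneg y x₀) hs.le)]
        exact div_le_div_of_nonneg_right (hg_le y x₀) hs.le
      have h2 : ‖a • x₀ - y‖ ≤ a * ‖x₀‖ + (‖x‖ + 1) := by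
        calc ‖a • x₀ - y‖ ≤ ‖a • x₀‖ + ‖y‖ := norm_sub_le _ _
          _ ≤ a * ‖x₀‖ + (‖x‖ + 1) := by
              have h3 : ‖y‖ ≤ ‖x‖ + 1 := by
                have := Metric.mem_ball.mp hy
                calc ‖y‖ ≤ ‖x‖ + dist y x := by
                      rw [dist_eq_norm]
                      have := norm_sub_norm_le y x
                      linarith [norm_sub_norm_le y x]
                  _ ≤ ‖x‖ + 1 := by linarith
              have h4 : ‖a • x₀‖ = a * ‖x₀‖ := by
                rw [norm_smul, Real.norm_of_nonneg ha.le]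
              linarith
      exact mul_le_mul h1 h2 (norm_nonneg _)
        (div_nonneg (hp₀nonneg _) hs.le)
    have bound_int : Integrable bound := by
      have : bound = fun x₀ => (a / s) * (‖x₀‖ * p₀ x₀) + ((‖x‖ + 1) / s) * p₀ x₀ := by
        funext x₀; simp only [hbdef]; ring
      rw [this]
      exact (hp₀moment.const_mul _).add (hp₀int.const_mul _)
    have h_diff : ∀ᵐ x₀ ∂(volume : Measure (EuclideanSpace ℝ (Fin n))), ∀ y ∈ Metric.ball x 1,
        HasFDerivAt (fun z => g z x₀) (F' y x₀) y :=
      Filter.Eventually.of_forall fun x₀ y _ => hderiv x₀ y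
    have main := hasFDerivAt_integral_of_dominated_of_fderiv_le (Metric.ball_mem_nhds x one_pos) hF_meas
      (hg_int x) hF'_meas h_bound bound_int h_diff
    have hv_int : Integrable (v x) := by
      refine bound_int.mono' (hv_meas x) (Filter.Eventually.of_forall fun x₀ => ?_)
      have := h_bound
      rw [← hnormF' x x₀]
      -- reuse bound at y = x
      have hxball : x ∈ Metric.ball x 1 := Metric.mem_ball_self one_pos
      rw [hnormF', hvdef]
      simp only [norm_smul, Real.norm_eq_abs]
      have h1 : |g x x₀ / s| ≤ p₀ x₀ / s := by
        rw [abs_of_nonneg (div_nonneg (hg_nonneg x x₀) hs.le)]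
        exact div_le_div_of_nonneg_right (hg_le x x₀) hs.le
      have h2 : ‖a • x₀ - x‖ ≤ a * ‖x₀‖ + (‖x‖ + 1) := by
        calc ‖a • x₀ - x‖ ≤ ‖a • x₀‖ + ‖x‖ := norm_sub_le _ _
          _ ≤ a * ‖x₀‖ + (‖x‖ + 1) := by
              have h4 : ‖a • x₀‖ = a * ‖x₀‖ := by
                rw [norm_smul, Real.norm_of_nonneg ha.le]
              linarith
      have := mul_le_mul h1 h2 (norm_nonneg _) (div_nonneg (hp₀nonneg _) hs.le)
      simpa [hbdef, Real.norm_eq_abs] using this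
    have hint_eq : (∫ x₀, F' x x₀) = innerSL ℝ (∫ x₀, v x x₀) :=
      ContinuousLinearMap.integral_comp_comm (innerSL ℝ (E := EuclideanSpace ℝ (Fin n))) hv_int
    have hv_eq : v x = fun x₀ => s⁻¹ • (a • (g x x₀ • x₀) - g x x₀ • x) := by
      funext x₀
      simp only [hvdef]
      match_scalars <;> field_simp <;> ring
    have hvint_eq : (∫ x₀, v x x₀)
        = s⁻¹ • (a • (∫ x₀, g x x₀ • x₀) - (∫ x₀, g x x₀) • x) := by
      rw [hv_eq]
      rw [integral_smul]
      congr 1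
      have h1 : Integrable (fun x₀ => a • (g x x₀ • x₀)) := (hJ_int x).smul a
      have h2 : Integrable (fun x₀ => g x x₀ • x) := (hg_int x).smul_const x
      rw [integral_sub h1 h2]
      rw [integral_smul, integral_smul_const]
    rw [hint_eq, hvint_eq] at main
    exact main
  -- derivative of p
  have hasP : ∀ x : (EuclideanSpace ℝ (Fin n)), HasFDerivAt p
      (innerSL ℝ (C • s⁻¹ • (a • (∫ x₀, g x x₀ • x₀) - (∫ x₀, g x x₀) • x))) x := by
    intro x
    have hpfun : p = fun y => C * ∫ x₀, g y x₀ := funext hp_eq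
    rw [hpfun]
    have := (hasF x).const_mul C
    refine this.congr_fderiv (Eq.symm ?_)
    ext u
    simp only [innerSL_apply_apply, ContinuousLinearMap.smul_apply, smul_eq_mul,
      real_inner_smul_left]
  refine ⟨hppos, fun x => ((hasP x).differentiableAt : DifferentiableAt ℝ p x), ?_⟩
  intro x
  have hlogFD : HasFDerivAt (fun y => Real.log (p y))
      ((p x)⁻¹ • innerSL ℝ (C • s⁻¹ • (a • (∫ x₀, g x x₀ • x₀) - (∫ x₀, g x x₀) • x))) x :=
    (hasP x).log (ne_of_gt (hppos x))
  have hgrad : HasGradientAt (fun y => Real.log (p y))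
      ((p x)⁻¹ • C • s⁻¹ • (a • (∫ x₀, g x x₀ • x₀) - (∫ x₀, g x x₀) • x)) x := by
    rw [hasGradientAt_iff_hasFDerivAt]
    refine hlogFD.congr_fderiv (Eq.symm ?_)
    ext u
    simp only [InnerProductSpace.toDual_apply_apply, ContinuousLinearMap.smul_apply,
      innerSL_apply_apply, smul_eq_mul, real_inner_smul_left]
  rw [hgrad.gradient, hm x]
  have hmI : (∫ x₀, Real.exp (-‖x - a • x₀‖ ^ 2 / (2 * s)) * p₀ x₀) = ∫ x₀, g x x₀ := rfl
  have hmJ : (∫ x₀, (Real.exp (-‖x - a • x₀‖ ^ 2 / (2 * s)) * p₀ x₀) • x₀)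
      = ∫ x₀, g x x₀ • x₀ := rfl
  rw [hmI, hmJ, hp_eq x]
  have hI₀ : (∫ x₀, g x x₀) ≠ 0 := ne_of_gt (hI₀pos x)
  have hC : C ≠ 0 := ne_of_gt hCpos
  have hs' : s ≠ 0 := ne_of_gt hs
  match_scalars <;> field_simp <;> ring
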